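/- Let K be a field of characteristic zero, A a unital K-algebra (not necessarily commutative), and δ a locally finite K-E-derivation of A. If the identity element 1_A lies in the image of δ, then δ is surjective. -/

import Mathlib

/-- Let `K` be a field of characteristic zero, `A` a unital `K`-algebra
(not necessarily commutative), and `δ` a locally finite `K`-`E`-derivation of `A`
(i.e. `δ = Id - φ` for some `K`-algebra endomorphism `φ` of `A`).  If the identity
element `1` lies in the image of `δ`, then `δ` is surjective. -/
theorem surjective_of_one_mem_image_locally_finite_Ederivation
    {K : Type*} [Field K] [CharZero K]
    {A : Type*} [Ring A] [Algebra K A]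
    (δ : A →ₗ[K] A)
    (hEder : ∃ φ : A →ₐ[K] A, ∀ a : A, δ a = a - φ a)
    (hLF : ∀ a : A,
      FiniteDimensional K (Submodule.span K (Set.range fun i : ℕ => (δ ^ i) a)))
    (h1 : (1 : A) ∈ LinearMap.range δ) :
    Function.Surjective δ := by
  classical
  obtain ⟨φ, hφ⟩ := hEder
  obtain ⟨b, hb⟩ := h1
  have hφ' : ∀ a : A, φ a = a - δ a := fun a => by rw [hφ a, sub_sub_cancel]
  have hφb : φ b = b - 1 := by rw [hφ' b, hb]
  -- the "discrete derivative" of powers of `b`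
  have hd : ∀ k : ℕ, ∃ e ∈ Submodule.span K ((fun j : ℕ => b ^ j) '' Set.Iio k),
      δ (b ^ (k + 1)) = ((k : K) + 1) • b ^ k + e := by
    intro k
    induction k with
    | zero =>
      refine ⟨0, Submodule.zero_mem _, ?_⟩
      simp [hb]
    | succ k ih =>
      obtain ⟨e, he, hde⟩ := ih
      have hrec : δ (b ^ (k + 2)) = b ^ (k + 1) + δ (b ^ (k + 1)) * (b - 1) := by
        rw [hφ (b ^ (k + 2)), hφ (b ^ (k + 1)), map_pow, map_pow, hφb,
          pow_succ b (k + 1), pow_succ (b - 1) (k + 1)]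
        noncomm_ring
      refine ⟨e * b - e - ((k : K) + 1) • b ^ k, ?_, ?_⟩
      · have hmono : Submodule.span K ((fun j : ℕ => b ^ j) '' Set.Iio k) ≤
            Submodule.span K ((fun j : ℕ => b ^ j) '' Set.Iio (k + 1)) :=
          Submodule.span_mono (Set.image_mono (Set.Iio_subset_Iio (Nat.le_succ k)))
        have heb : e * b ∈ Submodule.span K ((fun j : ℕ => b ^ j) '' Set.Iio (k + 1)) := by
          refine Submodule.span_induction (p := fun z _ => z * b ∈
            Submodule.span K ((fun j : ℕ => b ^ j) '' Set.Iio (k + 1))) ?_ ?_ ?_ ?_ he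
          · rintro z ⟨j, hj, rfl⟩
            refine Submodule.subset_span ⟨j + 1, ?_, ?_⟩
            · exact Nat.succ_lt_succ hj
            · simp [pow_succ]
          · simp
          · intro u v _ _ hu hv
            rw [add_mul]; exact Submodule.add_mem _ hu hv
          · intro c u _ hu
            rw [smul_mul_assoc]; exact Submodule.smul_mem _ _ hu
        refine Submodule.sub_mem _ (Submodule.sub_mem _ heb (hmono he)) ?_
        exact Submodule.smul_mem _ _
          (Submodule.subset_span ⟨k, Nat.lt_succ_self k, rfl⟩)
      · rw [hrec, hde]
        push_cast
        simp only [add_mul, smul_mul_assoc, mul_sub, mul_one, smul_sub, pow_succ]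
        module
  -- every `δ`-nilpotent element times any power of `b` is in the range of `δ`
  have key : ∀ N : ℕ, ∀ x : A, (δ ^ N) x = 0 → ∀ k : ℕ,
      x * b ^ k ∈ LinearMap.range δ := by
    intro N
    induction N with
    | zero =>
      intro x hx k
      rw [pow_zero, Module.End.one_apply] at hx
      rw [hx, zero_mul]
      exact Submodule.zero_mem _
    | succ N ih =>
      intro x hx k
      induction k using Nat.strong_induction_on with
      | _ k ihk =>
        set y : A := ∑ i ∈ Finset.range (N + 1), (δ ^ i) x with hy
        have hδy : δ y = ∑ i ∈ Finset.range (N + 1), (δ ^ (i + 1)) x := by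
          rw [hy, map_sum]
          refine Finset.sum_congr rfl fun i _ => ?_
          rw [pow_succ', Module.End.mul_apply]
        have hφy : φ y = x := by
          rw [hφ' y, hδy, hy, ← Finset.sum_sub_distrib,
            Finset.sum_range_sub' (f := fun i => (δ ^ i) x), hx, pow_zero,
            Module.End.one_apply, sub_zero]
        have hδy' : (δ ^ N) (δ y) = 0 := by
          rw [hδy, map_sum]
          refine Finset.sum_eq_zero fun i _ => ?_
          rw [← Module.End.mul_apply, ← pow_add, show N + (i + 1) = i + (N + 1) by omega,
            pow_add, Module.End.mul_apply, hx, map_zero]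
        have hyx : y = x + δ y := by
          rw [← hφy, hφ' y, sub_add_cancel]
        have hkey : x * δ (b ^ (k + 1)) =
            δ (y * b ^ (k + 1)) - δ y * b ^ (k + 1) := by
          have hyB : y * b ^ (k + 1) = x * b ^ (k + 1) + δ y * b ^ (k + 1) := by
            conv_lhs => rw [hyx]
            rw [add_mul]
          rw [hφ (y * b ^ (k + 1)), map_mul, hφy, hφ (b ^ (k + 1)), hyB]
          noncomm_ring
        have hmem : x * δ (b ^ (k + 1)) ∈ LinearMap.range δ := by
          rw [hkey]
          exact Submodule.sub_mem _ ⟨_, rfl⟩ (ih (δ y) hδy' (k + 1))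
        obtain ⟨e, he, hde⟩ := hd k
        have hxe : x * e ∈ LinearMap.range δ := by
          refine Submodule.span_induction
            (p := fun z _ => x * z ∈ LinearMap.range δ) ?_ ?_ ?_ ?_ he
          · rintro z ⟨j, hj, rfl⟩
            exact ihk j hj
          · simp
          · intro u v _ _ hu hv
            rw [mul_add]; exact Submodule.add_mem _ hu hv
          · intro c u _ hu
            rw [mul_smul_comm]; exact Submodule.smul_mem _ _ hu
        have hsm : ((k : K) + 1) • (x * b ^ k) ∈ LinearMap.range δ := by
          have heq : ((k : K) + 1) • (x * b ^ k) = x * δ (b ^ (k + 1)) - x * e := by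
            rw [hde, mul_add, mul_smul_comm]
            abel
          rw [heq]
          exact Submodule.sub_mem _ hmem hxe
        have h0 : ((k : K) + 1) ≠ 0 := by
          have h1 : ((k + 1 : ℕ) : K) ≠ 0 := Nat.cast_ne_zero.2 (Nat.succ_ne_zero k)
          push_cast at h1
          exact h1
        have := Submodule.smul_mem _ ((k : K) + 1)⁻¹ hsm
        rwa [inv_smul_smul₀ h0] at this
  -- every element is in the range of `δ`
  intro a
  haveI := hLF a
  let L : Polynomial K →ₗ[K] A :=
    { toFun := fun p => (Polynomial.aeval (δ : Module.End K A) p) a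
      map_add' := fun p q => by simp [LinearMap.add_apply]
      map_smul' := fun c p => by simp }
  have hrange : ∀ p : Polynomial K,
      L p ∈ Submodule.span K (Set.range fun i : ℕ => (δ ^ i) a) := by
    intro p
    induction p using Polynomial.induction_on' with
    | add p q hp hq =>
      rw [map_add]
      exact Submodule.add_mem _ hp hq
    | monomial n c =>
      have : L (Polynomial.monomial n c) = c • (δ ^ n) a := by
        simp [L, Polynomial.aeval_monomial, Algebra.smul_def,
          Module.End.mul_apply]
      rw [this]
      exact Submodule.smul_mem _ _ (Submodule.subset_span ⟨n, rfl⟩)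
  have hex : ∃ p : Polynomial K, p ≠ 0 ∧ L p = 0 := by
    by_contra hcon
    push_neg at hcon
    have hinj : Function.Injective L := by
      rw [← LinearMap.ker_eq_bot, LinearMap.ker_eq_bot']
      intro p hp
      by_contra hp0
      exact hcon p hp0 hp
    let L' : Polynomial K →ₗ[K]
        (Submodule.span K (Set.range fun i : ℕ => (δ ^ i) a)) :=
      L.codRestrict _ hrange
    have hinj' : Function.Injective L' := by
      intro p q hpq
      apply hinj
      exact congrArg Subtype.val hpq
    haveI := FiniteDimensional.of_injective L' hinj'
    haveI : Fintype ℕ := FiniteDimensional.fintypeBasisIndex (Polynomial.basisMonomials K)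
    exact not_finite ℕ
  obtain ⟨p, hp0, hpa⟩ := hex
  set n := p.natTrailingDegree with hn
  have hdvd : (Polynomial.X : Polynomial K) ^ n ∣ p :=
    Polynomial.X_pow_dvd_iff.2 fun d hd => Polynomial.coeff_eq_zero_of_lt_natTrailingDegree hd
  obtain ⟨q, hq⟩ := hdvd
  have hcoeff : p.coeff n = q.coeff 0 := by
    rw [hq]
    simpa using Polynomial.coeff_X_pow_mul q n 0
  have hq0 : q.coeff 0 ≠ 0 := by
    rw [← hcoeff]
    intro h
    exact (Polynomial.trailingCoeff_nonzero_iff_nonzero.2 hp0) h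
  set c0 := q.coeff 0 with hc0
  have hX : (Polynomial.X : Polynomial K) ∣ q - Polynomial.C c0 := by
    rw [Polynomial.X_dvd_iff]
    simp [hc0]
  obtain ⟨r, hr⟩ := hX
  -- δ^n (L q) = 0
  have hnil : (δ ^ n) (L q) = 0 := by
    have : L p = (δ ^ n) (L q) := by
      simp only [L, LinearMap.coe_mk, AddHom.coe_mk, hq, map_mul, map_pow,
        Polynomial.aeval_X, Module.End.mul_apply]
    rw [← this, hpa]
  have hLq : L q ∈ LinearMap.range δ := by
    have := key n (L q) hnil 0
    rwa [pow_zero, mul_one] at this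
  have hLqeq : L q = c0 • a + δ (L r) := by
    have hq' : q = Polynomial.C c0 + Polynomial.X * r := by
      rw [← hr]; ring
    rw [hq']
    simp only [L, LinearMap.coe_mk, AddHom.coe_mk, map_add, map_mul,
      Polynomial.aeval_C, Polynomial.aeval_X, LinearMap.add_apply, Module.End.mul_apply,
      Module.algebraMap_end_apply]
  have hca : c0 • a ∈ LinearMap.range δ := by
    have : c0 • a = L q - δ (L r) := by rw [hLqeq]; abel
    rw [this]
    exact Submodule.sub_mem _ hLq ⟨_, rfl⟩
  have := Submodule.smul_mem _ c0⁻¹ hca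
  rw [inv_smul_smul₀ hq0] at this
  exact this
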